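/- arXiv:1310.5666 — 3 statements merged into one kernel-verified Lean document; each statement's English description precedes it below -/
import Mathlib

section
/- For a strictly positive probability p on the cell set I, define θ_j = Σ_{j' ◁ j or j'=0} (-1)^{|S(j)|-|S(j')|} log(p(j')/p(0)) for each cell j, where the sum runs over cells j' in J ∪ {0} below j. Then for every cell i ∈ I, log p(i) = log p(0) + Σ_{j ∈ J, j ◁ i} θ_j, provided log(p(i)/p(0)) lies in the linear span Ω_D (so that θ_i = 0 for i ∉ J). -/
attribute [local instance] Classical.propDecidable

/-- The support of a cell. -/
noncomputable def supp {V : Type*} [Fintype V] {I : V → Type*}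
    (z : ∀ v, I v) (i : ∀ v, I v) : Finset V :=
  Finset.univ.filter (fun v => i v ≠ z v)

/-- `tri z j i` is the relation `j ◁ i`.  Note `tri z z i` holds for all `i`,
so `{j' : tri z j' j}` is the set `{j' : j' ◁ j or j' = 0}`. -/
def tri {V : Type*} {I : V → Type*} (z : ∀ v, I v) (j i : ∀ v, I v) : Prop :=
  ∀ v, j v ≠ z v → j v = i v

section Aux

variable {V : Type*} [Fintype V] [DecidableEq V] {I : V → Type*}
  [∀ v, Fintype (I v)] [∀ v, DecidableEq (I v)] (z : ∀ v, I v)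

/-- Restriction of a cell to a set of coordinates. -/
noncomputable def res (i : ∀ v, I v) (T : Finset V) : ∀ v, I v :=
  fun v => if v ∈ T then i v else z v

lemma mem_supp {i : ∀ v, I v} {v : V} : v ∈ supp z i ↔ i v ≠ z v := by
  simp [supp]

lemma supp_res (i : ∀ v, I v) {T : Finset V} (hT : T ⊆ supp z i) :
    supp z (res z i T) = T := by
  ext v
  simp only [mem_supp, res]
  by_cases h : v ∈ T
  · simpa [h] using (mem_supp z).1 (hT h)
  · simp [h]

lemma res_supp {j i : ∀ v, I v} (h : tri z j i) : res z i (supp z j) = j := by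
  funext v
  by_cases hv : j v = z v
  · simp [res, mem_supp, hv]
  · simp [res, mem_supp, hv, (h v hv).symm]

lemma res_res (i : ∀ v, I v) {T T' : Finset V} (h : T' ⊆ T) :
    res z (res z i T) T' = res z i T' := by
  funext v
  by_cases hv : v ∈ T'
  · simp [res, hv, h hv]
  · simp [res, hv]

lemma tri_res (i : ∀ v, I v) (T : Finset V) : tri z (res z i T) i := by
  intro v hv
  by_cases h : v ∈ T
  · simp [res, h]
  · simp [res, h] at hv

lemma supp_subset {j i : ∀ v, I v} (h : tri z j i) : supp z j ⊆ supp z i := by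
  intro v hv
  rw [mem_supp] at hv ⊢
  rw [← h v hv]
  exact hv

/-- Bijection between `{j : j ◁ i}` and subsets of `supp z i`. -/
lemma sum_tri (i : ∀ v, I v) (G : (∀ v, I v) → ℝ) :
    ∑ j ∈ Finset.univ.filter (fun j => tri z j i), G j
      = ∑ T ∈ (supp z i).powerset, G (res z i T) := by
  refine Finset.sum_nbij' (fun j => supp z j) (fun T => res z i T) ?_ ?_ ?_ ?_ ?_
  · intro j hj
    rw [Finset.mem_filter] at hj
    exact Finset.mem_powerset.2 (supp_subset z hj.2)
  · intro T hT
    exact Finset.mem_filter.2 ⟨Finset.mem_univ _, tri_res z i T⟩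
  · intro j hj
    rw [Finset.mem_filter] at hj
    exact res_supp z hj.2
  · intro T hT
    exact supp_res z i (Finset.mem_powerset.1 hT)
  · intro j hj
    rw [Finset.mem_filter] at hj
    rw [res_supp z hj.2]

lemma neg_one_pow_sub {k n : ℕ} (h : k ≤ n) :
    ((-1 : ℝ)) ^ (n - k) = (-1) ^ n * (-1) ^ k := by
  have h1 : ((-1 : ℝ)) ^ n = (-1) ^ (n - k) * (-1) ^ k := by
    rw [← pow_add, Nat.sub_add_cancel h]
  have h2 : ((-1 : ℝ)) ^ k * (-1) ^ k = 1 := by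
    rw [← pow_add, ← two_mul, pow_mul]; norm_num
  calc ((-1 : ℝ)) ^ (n - k) = (-1) ^ (n - k) * ((-1) ^ k * (-1) ^ k) := by rw [h2, mul_one]
    _ = (-1) ^ n * (-1) ^ k := by rw [← mul_assoc, ← h1]

/-- Möbius inversion over powersets, product-sign form. -/
lemma moebius' (S : Finset V) (F : Finset V → ℝ) :
    ∑ T ∈ S.powerset, ∑ T' ∈ T.powerset,
      (-1 : ℝ) ^ T.card * (-1) ^ T'.card * F T' = F S := by
  induction S using Finset.induction_on generalizing F with
  | empty => simp
  | insert a S ha IH =>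
    rw [Finset.sum_powerset_insert ha]
    have expand : ∀ T ∈ S.powerset,
        (∑ T' ∈ (insert a T).powerset,
            (-1 : ℝ) ^ (insert a T).card * (-1) ^ T'.card * F T')
          = -(∑ T' ∈ T.powerset, (-1 : ℝ) ^ T.card * (-1) ^ T'.card * F T')
            + ∑ T' ∈ T.powerset, (-1 : ℝ) ^ T.card * (-1) ^ T'.card * F (insert a T') := by
      intro T hT
      have haT : a ∉ T := fun h => ha (Finset.mem_powerset.1 hT h)
      rw [Finset.sum_powerset_insert haT, Finset.card_insert_of_notMem haT]
      have e1 : ∀ T' ∈ T.powerset,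
          (-1 : ℝ) ^ (T.card + 1) * (-1) ^ T'.card * F T'
            = -((-1 : ℝ) ^ T.card * (-1) ^ T'.card * F T') := by
        intro T' _
        rw [pow_succ]; ring
      have e2 : ∀ T' ∈ T.powerset,
          (-1 : ℝ) ^ (T.card + 1) * (-1) ^ (insert a T').card * F (insert a T')
            = (-1 : ℝ) ^ T.card * (-1) ^ T'.card * F (insert a T') := by
        intro T' hT'
        have haT' : a ∉ T' := fun h => haT (Finset.mem_powerset.1 hT' h)
        rw [Finset.card_insert_of_notMem haT', pow_succ, pow_succ]; ring
      rw [Finset.sum_congr rfl e1, Finset.sum_congr rfl e2, Finset.sum_neg_distrib]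
    rw [Finset.sum_congr rfl expand, Finset.sum_add_distrib, Finset.sum_neg_distrib]
    rw [IH (fun T' => F (insert a T'))]
    ring
/-- Möbius inversion over powersets. -/
lemma moebius (S : Finset V) (F : Finset V → ℝ) :
    ∑ T ∈ S.powerset, ∑ T' ∈ T.powerset,
      (-1 : ℝ) ^ (T.card - T'.card) * F T' = F S := by
  rw [← moebius' S F]
  refine Finset.sum_congr rfl fun T hT => Finset.sum_congr rfl fun T' hT' => ?_
  rw [neg_one_pow_sub (Finset.card_le_card (Finset.mem_powerset.1 hT'))]

end Aux

/-- Loglinear expansion: if `log (p/p(0))` lies in `Ω_D` and `θ_j` is defined by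
Möbius inversion, then `log p(i) = log p(0) + ∑_{j ∈ J, j ◁ i} θ_j`. -/
theorem stmt3 {V : Type*} [Fintype V] [DecidableEq V]
    {I : V → Type*} [∀ v, Fintype (I v)] [∀ v, DecidableEq (I v)]
    (z : ∀ v, I v)
    (D : Finset (Finset V))
    (hdown : ∀ d ∈ D, ∀ d' : Finset V, d' ⊆ d → d' ≠ ∅ → d' ∈ D)
    (hne : ∀ d ∈ D, d ≠ ∅)
    (hcover : D.biUnion id = Finset.univ)
    (p : (∀ v, I v) → ℝ) (hp : ∀ i, 0 < p i)
    -- log (p(i)/p(0)) belongs to the linear span Ω_D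
    (hΩ : ∃ g : Finset V → (∀ v, I v) → ℝ,
      (∀ d ∈ D, ∀ i i' : ∀ v, I v, (∀ v ∈ d, i v = i' v) → g d i = g d i') ∧
      ∀ i, Real.log (p i / p z) = ∑ d ∈ D, g d i)
    (θ : (∀ v, I v) → ℝ)
    (hθ : ∀ j, θ j = ∑ j' ∈ Finset.univ.filter (fun j' => tri z j' j),
      (-1 : ℝ) ^ ((supp z j).card - (supp z j').card) * Real.log (p j' / p z)) :
    ∀ i, Real.log (p i) = Real.log (p z) +
      ∑ j ∈ Finset.univ.filter (fun j => supp z j ∈ D ∧ tri z j i), θ j := by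
  obtain ⟨g, hg, hglog⟩ := hΩ
  set f : (∀ v, I v) → ℝ := fun i => Real.log (p i / p z) with hf
  -- expansion of θ over subsets of the support
  have hθ' : ∀ j, θ j = ∑ T ∈ (supp z j).powerset,
      (-1 : ℝ) ^ ((supp z j).card - T.card) * f (res z j T) := by
    intro j
    rw [hθ j, sum_tri z j (fun j' => (-1 : ℝ) ^ ((supp z j).card - (supp z j').card) * f j')]
    refine Finset.sum_congr rfl fun T hT => ?_
    rw [supp_res z j (Finset.mem_powerset.1 hT)]
  -- θ vanishes outside J
  have hθ0 : ∀ j, supp z j ∉ D → θ j = 0 := by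
    intro j hj
    by_cases hS : supp z j = ∅
    · rw [hθ' j, hS]
      have hz : res z j (∅ : Finset V) = z := by
        funext v; simp [res]
      have hone : p z / p z = 1 := div_self (hp z).ne'
      simp [hz, hf, hone]
    · rw [hθ' j]
      have hlog : ∀ T ∈ (supp z j).powerset,
          (-1 : ℝ) ^ ((supp z j).card - T.card) * f (res z j T)
            = ∑ d ∈ D, (-1 : ℝ) ^ ((supp z j).card - T.card) * g d (res z j T) := by
        intro T _
        rw [hf]
        simp only [hglog (res z j T), Finset.mul_sum]
      rw [Finset.sum_congr rfl hlog, Finset.sum_comm]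
      refine Finset.sum_eq_zero fun d hd => ?_
      -- there is w ∈ supp z j with w ∉ d
      have hnotsub : ¬ supp z j ⊆ d := fun h => hj (hdown d hd _ h hS)
      obtain ⟨w, hwS, hwd⟩ := Finset.not_subset.1 hnotsub
      -- rewrite signs
      have hsign : ∀ T ∈ (supp z j).powerset,
          (-1 : ℝ) ^ ((supp z j).card - T.card) * g d (res z j T)
            = (-1 : ℝ) ^ (supp z j).card * ((-1) ^ T.card * g d (res z j T)) := by
        intro T hT
        rw [neg_one_pow_sub (Finset.card_le_card (Finset.mem_powerset.1 hT))]
        ring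
      rw [Finset.sum_congr rfl hsign, ← Finset.mul_sum]
      have hins : supp z j = insert w ((supp z j).erase w) :=
        (Finset.insert_erase hwS).symm
      rw [hins, Finset.sum_powerset_insert (Finset.notMem_erase w _)]
      have hpair : ∀ T ∈ ((supp z j).erase w).powerset,
          (-1 : ℝ) ^ (insert w T).card * g d (res z j (insert w T))
            = -((-1 : ℝ) ^ T.card * g d (res z j T)) := by
        intro T hT
        have hwT : w ∉ T := fun h =>
          Finset.notMem_erase w _ (Finset.mem_powerset.1 hT h)
        have hgeq : g d (res z j (insert w T)) = g d (res z j T) := by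
          refine hg d hd _ _ fun v hv => ?_
          have hvw : v ≠ w := fun h => hwd (h ▸ hv)
          simp [res, Finset.mem_insert, hvw]
        rw [hgeq, Finset.card_insert_of_notMem hwT, pow_succ]
        ring
      rw [Finset.sum_congr rfl hpair, Finset.sum_neg_distrib]
      ring
  -- the sum over J of θ equals the sum over all j ◁ i
  intro i
  have hsub : Finset.univ.filter (fun j => supp z j ∈ D ∧ tri z j i)
      ⊆ Finset.univ.filter (fun j => tri z j i) := by
    intro j hj
    rw [Finset.mem_filter] at hj ⊢
    exact ⟨hj.1, hj.2.2⟩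
  have hmain : ∑ j ∈ Finset.univ.filter (fun j => supp z j ∈ D ∧ tri z j i), θ j
      = ∑ j ∈ Finset.univ.filter (fun j => tri z j i), θ j := by
    refine Finset.sum_subset hsub fun j hj hj' => ?_
    rw [Finset.mem_filter] at hj hj'
    push_neg at hj'
    exact hθ0 j fun h => hj' hj.1 h hj.2
  have hfull : ∑ j ∈ Finset.univ.filter (fun j => tri z j i), θ j = f i := by
    rw [sum_tri z i θ]
    have hexp : ∀ T ∈ (supp z i).powerset,
        θ (res z i T) = ∑ T' ∈ T.powerset,
          (-1 : ℝ) ^ (T.card - T'.card) * f (res z i T') := by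
      intro T hT
      rw [hθ' (res z i T), supp_res z i (Finset.mem_powerset.1 hT)]
      refine Finset.sum_congr rfl fun T' hT' => ?_
      rw [res_res z i (Finset.mem_powerset.1 hT')]
    rw [Finset.sum_congr rfl hexp, moebius]
    rw [res_supp z (fun v hv => rfl)]
  rw [hmain, hfull]
  have hfi : f i = Real.log (p i) - Real.log (p z) := by
    simp only [hf]
    exact Real.log_div (hp i).ne' (hp z).ne'
  rw [hfi]; ring
end

section
/- Monotonicity of principal blocks of inverses: let K be a symmetric positive definite real matrix indexed by a finite set partitioned as A ∪ B ∪ C. Then the A-block of K⁻¹ satisfies [K⁻¹]_{AA} ⪰ [(K_{(A∪B)(A∪B)})⁻¹]_{AA} in the Loewner order, where K_{(A∪B)(A∪B)} is the principal submatrix of K on A ∪ B. -/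
open Matrix

lemma key_block_inv {X Y : Type*} [Fintype X] [Fintype Y] [DecidableEq X] [DecidableEq Y]
    (N : Matrix (X ⊕ Y) (X ⊕ Y) ℝ) (hN : N.PosDef) :
    ((N⁻¹).toBlocks₁₁ - (N.toBlocks₁₁)⁻¹).PosSemidef := by
  set P := N.toBlocks₁₁ with hPdef
  set Q := N.toBlocks₁₂ with hQdef
  set R := N.toBlocks₂₂ with hRdef
  have h21 : N.toBlocks₂₁ = Qᴴ := by
    ext j i
    have := congrFun (congrFun hN.1 (Sum.inr j)) (Sum.inl i)
    simpa [hQdef, Matrix.toBlocks₂₁, Matrix.toBlocks₁₂, Matrix.conjTranspose_apply] using this.symm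
  have hblocks : N = fromBlocks P Q Qᴴ R := by
    rw [← h21, hPdef, hQdef, hRdef, fromBlocks_toBlocks]
  -- P is positive definite
  have hP : P.PosDef := by
    refine PosDef.of_dotProduct_mulVec_pos ?_ ?_
    · ext i j
      have := congrFun (congrFun hN.1 (Sum.inl i)) (Sum.inl j)
      simpa [hPdef, Matrix.toBlocks₁₁, Matrix.conjTranspose_apply] using this
    · intro x hx
      have hx' : (Sum.elim x 0 : X ⊕ Y → ℝ) ≠ 0 := by
        intro h
        apply hx
        funext i
        exact congrFun h (Sum.inl i)
      have := hN.dotProduct_mulVec_pos hx'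
      rw [hblocks] at this
      simpa [fromBlocks_mulVec, Function.star_sumElim, sumElim_dotProduct_sumElim] using this
  haveI iP : Invertible P := hP.isUnit.invertible
  haveI iN : Invertible N := hN.isUnit.invertible
  -- the Schur complement
  haveI iS' : Invertible (R - Qᴴ * ⅟P * Q) := by
    haveI : Invertible (fromBlocks P Q Qᴴ R) := hblocks ▸ iN
    exact invertibleOfFromBlocks₁₁Invertible P Q Qᴴ R
  have hSinv : (R - Qᴴ * P⁻¹ * Q)⁻¹.PosSemidef := by
    have hS : (R - Qᴴ * P⁻¹ * Q).PosSemidef :=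
      (PosDef.fromBlocks₁₁ Q R hP).mp (hblocks ▸ hN.posSemidef)
    exact hS.inv
  -- block inverse formula
  have hinv : N⁻¹ = fromBlocks
      (P⁻¹ + P⁻¹ * Q * (R - Qᴴ * P⁻¹ * Q)⁻¹ * Qᴴ * P⁻¹)
      (-(P⁻¹ * Q * (R - Qᴴ * P⁻¹ * Q)⁻¹))
      (-((R - Qᴴ * P⁻¹ * Q)⁻¹ * Qᴴ * P⁻¹))
      ((R - Qᴴ * P⁻¹ * Q)⁻¹) := by
    haveI : Invertible (fromBlocks P Q Qᴴ R) := hblocks ▸ iN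
    rw [hblocks]
    have := invOf_fromBlocks₁₁_eq P Q Qᴴ R
    simp only [invOf_eq_nonsing_inv] at this
    exact this
  have h11 : (N⁻¹).toBlocks₁₁ - P⁻¹ = P⁻¹ * Q * (R - Qᴴ * P⁻¹ * Q)⁻¹ * Qᴴ * P⁻¹ := by
    rw [hinv]
    simp [Matrix.toBlocks_fromBlocks₁₁]
  rw [h11]
  have hrw : P⁻¹ * Q * (R - Qᴴ * P⁻¹ * Q)⁻¹ * Qᴴ * P⁻¹
      = (P⁻¹ * Q) * (R - Qᴴ * P⁻¹ * Q)⁻¹ * (P⁻¹ * Q)ᴴ := by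
    rw [Matrix.conjTranspose_mul, hP.1.inv.eq]
    simp [Matrix.mul_assoc]
  rw [hrw]
  exact hSinv.mul_mul_conjTranspose_same _

/-- Monotonicity of principal blocks of inverses: for a symmetric positive definite
matrix `K` indexed by `A ∪ B ∪ C`, the `A`-block of `K⁻¹` dominates, in the Loewner
order, the `A`-block of the inverse of the principal submatrix on `A ∪ B`. -/
theorem stmt11 {A B C : Type*} [Fintype A] [Fintype B] [Fintype C]
    [DecidableEq A] [DecidableEq B] [DecidableEq C]
    (K : Matrix ((A ⊕ B) ⊕ C) ((A ⊕ B) ⊕ C) ℝ) (hK : K.PosDef) :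
    Matrix.PosSemidef
      ((K⁻¹).submatrix (Sum.inl ∘ Sum.inl) (Sum.inl ∘ Sum.inl) -
        ((K.submatrix Sum.inl Sum.inl)⁻¹).submatrix Sum.inl Sum.inl) := by
  have h := (key_block_inv K hK).submatrix Sum.inl
  have e : ((K⁻¹).toBlocks₁₁ - (K.toBlocks₁₁)⁻¹).submatrix Sum.inl Sum.inl
      = (K⁻¹).submatrix (Sum.inl ∘ Sum.inl) (Sum.inl ∘ Sum.inl) -
        ((K.submatrix Sum.inl Sum.inl)⁻¹).submatrix Sum.inl Sum.inl := by
    ext i j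
    rfl
  rwa [e] at h
end

section
/- Schur complement monotonicity: for a symmetric positive definite matrix K partitioned with blocks over index sets A, B, C, the Schur complement of A with respect to B∪C dominates the Schur complement of A with respect to C alone: K_{AA} − K_{A,B∪C}(K_{B∪C,B∪C})⁻¹K_{B∪C,A} ⪯ K_{AA} − K_{A,C}(K_{C,C})⁻¹K_{C,A}, and hence their inverses satisfy the reverse inequality. -/
open Matrix

/-- Quadratic form of the lower-right block equals quadratic form of the zero-extension. -/
lemma extR {α β : Type*} [Fintype α] [Fintype β]
    (N : Matrix (α ⊕ β) (α ⊕ β) ℝ) (y : β → ℝ) :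
    y ⬝ᵥ (N.submatrix Sum.inr Sum.inr) *ᵥ y
      = Sum.elim (0 : α → ℝ) y ⬝ᵥ N *ᵥ Sum.elim (0 : α → ℝ) y := by
  simp [dotProduct, Matrix.mulVec, Fintype.sum_sum_type]

/-- Quadratic form of the `A ⊕ C` principal submatrix equals the quadratic form of the
zero-extension to `A ⊕ (B ⊕ C)`. -/
lemma ext0 {A B C : Type*} [Fintype A] [Fintype B] [Fintype C]
    (K : Matrix (A ⊕ (B ⊕ C)) (A ⊕ (B ⊕ C)) ℝ) (x : A → ℝ) (z : C → ℝ) :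
    Sum.elim x z ⬝ᵥ (K.submatrix (Sum.map id Sum.inr) (Sum.map id Sum.inr)) *ᵥ Sum.elim x z
      = Sum.elim x (Sum.elim (0 : B → ℝ) z) ⬝ᵥ K *ᵥ Sum.elim x (Sum.elim (0 : B → ℝ) z) := by
  simp [dotProduct, Matrix.mulVec, Fintype.sum_sum_type]

/-- The lower-right principal block of a positive definite matrix is positive definite. -/
lemma posDef22 {α β : Type*} [Fintype α] [Fintype β]
    {N : Matrix (α ⊕ β) (α ⊕ β) ℝ} (hN : N.PosDef) :
    (N.submatrix Sum.inr Sum.inr).PosDef := by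
  refine .of_dotProduct_mulVec_pos (hN.1.submatrix _) fun y hy => ?_
  rw [star_trivial, extR]
  exact hN.dotProduct_mulVec_pos (fun hc => hy (funext fun i => congrFun hc (Sum.inr i)))

/-- A Schur complement of a positive definite matrix is positive definite. -/
lemma schurPosDef {m n : Type*} [Fintype m] [Fintype n] [DecidableEq m] [DecidableEq n]
    {P : Matrix m m ℝ} {Q : Matrix m n ℝ} {D : Matrix n n ℝ}
    (h : (Matrix.fromBlocks P Q Qᴴ D).PosDef) (hD : D.PosDef) [Invertible D] :
    (P - Q * D⁻¹ * Qᴴ).PosDef := by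
  refine .of_dotProduct_mulVec_pos ((Matrix.IsHermitian.fromBlocks₂₂ P Q hD.1).mp h.1) fun x hx => ?_
  have hne : Sum.elim x (-((D⁻¹ * Qᴴ) *ᵥ x)) ≠ 0 := fun hc =>
    hx (funext fun i => congrFun hc (Sum.inl i))
  have h2 := h.dotProduct_mulVec_pos hne
  rw [Matrix.dotProduct_mulVec,
    Matrix.schur_complement_eq₂₂ P Q x (-((D⁻¹ * Qᴴ) *ᵥ x)) hD.1] at h2
  simpa [Matrix.dotProduct_mulVec] using h2

/-- Matrix inversion is antitone on positive definite matrices. -/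
lemma invAntitone {m : Type*} [Fintype m] [DecidableEq m]
    {M N : Matrix m m ℝ} (hM : M.PosDef) (hN : N.PosDef) (h : (N - M).PosSemidef) :
    (M⁻¹ - N⁻¹).PosSemidef := by
  haveI : Invertible M := M.invertibleOfIsUnitDet (isUnit_iff_ne_zero.mpr hM.det_pos.ne')
  haveI : Invertible N := N.invertibleOfIsUnitDet (isUnit_iff_ne_zero.mpr hN.det_pos.ne')
  haveI : Invertible M⁻¹ :=
    (M⁻¹).invertibleOfIsUnitDet (isUnit_iff_ne_zero.mpr hM.inv.det_pos.ne')
  have h1 : (Matrix.fromBlocks N (1 : Matrix m m ℝ) (1 : Matrix m m ℝ)ᴴ M⁻¹).PosSemidef := by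
    rw [Matrix.PosDef.fromBlocks₂₂ _ _ hM.inv]
    simpa [Matrix.nonsing_inv_nonsing_inv M (isUnit_iff_ne_zero.mpr hM.det_pos.ne')] using h
  have h2 := (Matrix.PosDef.fromBlocks₁₁ _ _ hN).mp h1
  simpa using h2

/-- Schur complement monotonicity: for a symmetric positive definite `K` with blocks
over `A`, `B`, `C`, the Schur complement of `A` with respect to `B ∪ C` is dominated
(in the Loewner order) by the Schur complement of `A` with respect to `C` alone, and
the inverses satisfy the reverse inequality. -/
theorem stmt12 {A B C : Type*} [Fintype A] [Fintype B] [Fintype C]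
    [DecidableEq A] [DecidableEq B] [DecidableEq C]
    (K : Matrix (A ⊕ (B ⊕ C)) (A ⊕ (B ⊕ C)) ℝ) (hK : K.PosDef) :
    Matrix.PosSemidef
      ((K.submatrix Sum.inl Sum.inl -
          K.submatrix Sum.inl (Sum.inr ∘ Sum.inr) *
            (K.submatrix (Sum.inr ∘ Sum.inr) (Sum.inr ∘ Sum.inr))⁻¹ *
              K.submatrix (Sum.inr ∘ Sum.inr) Sum.inl) -
        (K.submatrix Sum.inl Sum.inl -
          K.submatrix Sum.inl Sum.inr * (K.submatrix Sum.inr Sum.inr)⁻¹ *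
            K.submatrix Sum.inr Sum.inl)) ∧
    Matrix.PosSemidef
      ((K.submatrix Sum.inl Sum.inl -
          K.submatrix Sum.inl Sum.inr * (K.submatrix Sum.inr Sum.inr)⁻¹ *
            K.submatrix Sum.inr Sum.inl)⁻¹ -
        (K.submatrix Sum.inl Sum.inl -
          K.submatrix Sum.inl (Sum.inr ∘ Sum.inr) *
            (K.submatrix (Sum.inr ∘ Sum.inr) (Sum.inr ∘ Sum.inr))⁻¹ *
              K.submatrix (Sum.inr ∘ Sum.inr) Sum.inl)⁻¹) := by
  set P : Matrix A A ℝ := K.submatrix Sum.inl Sum.inl with hP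
  set Q : Matrix A (B ⊕ C) ℝ := K.submatrix Sum.inl Sum.inr with hQ
  set R : Matrix (B ⊕ C) (B ⊕ C) ℝ := K.submatrix Sum.inr Sum.inr with hRdef
  set Q' : Matrix A C ℝ := K.submatrix Sum.inl (Sum.inr ∘ Sum.inr) with hQ'
  set U : Matrix C C ℝ := K.submatrix (Sum.inr ∘ Sum.inr) (Sum.inr ∘ Sum.inr) with hU'
  set K' : Matrix (A ⊕ C) (A ⊕ C) ℝ :=
    K.submatrix (Sum.map id Sum.inr) (Sum.map id Sum.inr) with hK'def
  -- transposed off-diagonal blocks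
  have hQH : K.submatrix Sum.inr Sum.inl = Qᴴ := by
    ext i j
    simpa [Matrix.conjTranspose_apply, hQ] using (congrFun (congrFun hK.1 (Sum.inr i)) (Sum.inl j)).symm
  have hQ'H : K.submatrix (Sum.inr ∘ Sum.inr) Sum.inl = Q'ᴴ := by
    ext i j
    simpa [Matrix.conjTranspose_apply, hQ'] using
      (congrFun (congrFun hK.1 (Sum.inr (Sum.inr i))) (Sum.inl j)).symm
  -- block decompositions
  have hKfb : K = Matrix.fromBlocks P Q Qᴴ R := by
    rw [← hQH]; ext i j; cases i <;> cases j <;> rfl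
  have hK'pd : K'.PosDef := by
    refine .of_dotProduct_mulVec_pos (hK.1.submatrix _) fun u hu => ?_
    rw [star_trivial, ← Sum.elim_comp_inl_inr u, ext0]
    refine hK.dotProduct_mulVec_pos (fun hc => hu ?_)
    funext i
    cases i with
    | inl a => exact congrFun hc (Sum.inl a)
    | inr c => exact congrFun hc (Sum.inr (Sum.inr c))
  have hK'fb : K' = Matrix.fromBlocks P Q' Q'ᴴ U := by
    rw [← hQ'H]; ext i j; cases i <;> cases j <;> rfl
  have hR : R.PosDef := posDef22 hK
  have hU : U.PosDef := by
    have h := posDef22 hK'pd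
    rw [hK'def, Matrix.submatrix_submatrix] at h
    exact h
  haveI : Invertible R := R.invertibleOfIsUnitDet (isUnit_iff_ne_zero.mpr hR.det_pos.ne')
  haveI : Invertible U := U.invertibleOfIsUnitDet (isUnit_iff_ne_zero.mpr hU.det_pos.ne')
  -- the two Schur complements are positive definite
  have hS₂ : (P - Q * R⁻¹ * Qᴴ).PosDef := schurPosDef (hKfb ▸ hK) hR
  have hS₁ : (P - Q' * U⁻¹ * Q'ᴴ).PosDef := schurPosDef (hK'fb ▸ hK'pd) hU
  -- the pointwise inequality between the two Schur complements
  have key : ∀ x : A → ℝ,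
      x ⬝ᵥ (P - Q * R⁻¹ * Qᴴ) *ᵥ x ≤ x ⬝ᵥ (P - Q' * U⁻¹ * Q'ᴴ) *ᵥ x := by
    intro x
    set z₀ : C → ℝ := -((U⁻¹ * Q'ᴴ) *ᵥ x) with hz₀
    set v : (B ⊕ C) → ℝ := Sum.elim (0 : B → ℝ) z₀ with hv
    have hs1 := Matrix.schur_complement_eq₂₂ P Q' x z₀ hU.1
    have hs2 := Matrix.schur_complement_eq₂₂ P Q x v hR.1
    simp only [star_trivial] at hs1 hs2
    have h0 : (U⁻¹ * Q'ᴴ) *ᵥ x + z₀ = 0 := by rw [hz₀]; exact add_neg_cancel _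
    rw [h0] at hs1
    simp only [Matrix.zero_vecMul, zero_dotProduct, zero_add] at hs1
    have hw : 0 ≤ ((R⁻¹ * Qᴴ) *ᵥ x + v) ᵥ* R ⬝ᵥ ((R⁻¹ * Qᴴ) *ᵥ x + v) := by
      have := hR.posSemidef.dotProduct_mulVec_nonneg ((R⁻¹ * Qᴴ) *ᵥ x + v)
      rwa [star_trivial, Matrix.dotProduct_mulVec] at this
    have eA : Sum.elim x v ⬝ᵥ K *ᵥ Sum.elim x v
        = Sum.elim x z₀ ⬝ᵥ K' *ᵥ Sum.elim x z₀ := by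
      rw [hv, hK'def]; exact (ext0 K x z₀).symm
    have d1 : Sum.elim x v ⬝ᵥ K *ᵥ Sum.elim x v
        = Sum.elim x v ᵥ* Matrix.fromBlocks P Q Qᴴ R ⬝ᵥ Sum.elim x v := by
      rw [Matrix.dotProduct_mulVec, ← hKfb]
    have d2 : Sum.elim x z₀ ⬝ᵥ K' *ᵥ Sum.elim x z₀
        = Sum.elim x z₀ ᵥ* Matrix.fromBlocks P Q' Q'ᴴ U ⬝ᵥ Sum.elim x z₀ := by
      rw [Matrix.dotProduct_mulVec, ← hK'fb]
    have d3 : x ⬝ᵥ (P - Q * R⁻¹ * Qᴴ) *ᵥ x = x ᵥ* (P - Q * R⁻¹ * Qᴴ) ⬝ᵥ x :=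
      Matrix.dotProduct_mulVec _ _ _
    have d4 : x ⬝ᵥ (P - Q' * U⁻¹ * Q'ᴴ) *ᵥ x = x ᵥ* (P - Q' * U⁻¹ * Q'ᴴ) ⬝ᵥ x :=
      Matrix.dotProduct_mulVec _ _ _
    linarith [hs1, hs2, hw, eA, d1, d2, d3, d4]
  have part1 : Matrix.PosSemidef ((P - Q' * U⁻¹ * Q'ᴴ) - (P - Q * R⁻¹ * Qᴴ)) := by
    refine .of_dotProduct_mulVec_nonneg (hS₁.1.sub hS₂.1) fun x => ?_
    have := key x
    rw [star_trivial, Matrix.sub_mulVec, dotProduct_sub]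
    linarith
  constructor
  · rw [hQH, hQ'H]; exact part1
  · rw [hQH, hQ'H]; exact invAntitone hS₂ hS₁ part1
end
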